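/- Let H be a finite simple graph on vertex set V_H and let α > 0. Let S ⊆ V_H be nonempty with |S| < |V_H|/4 and φ_H(S) < α, and let S' be a nonempty subset of V_H∖S with |S'| < |V_H|/4 and φ_{H'}(S') < α, where H' is the subgraph of H induced by V_H∖S. Then φ_H(S ∪ S') < α. -/
import Mathlib


/-- Edges of `G` with one endpoint in `S` and the other endpoint in `U \ S`:
the cut edges `∂(S)` of `S`, inside the subgraph of `G` induced by `U` (when `S ⊆ U`). -/
def cutEdgesIn {V : Type*} (G : SimpleGraph V) (U S : Set V) : Set (Sym2 V) :=
  {e | e ∈ G.edgeSet ∧ ∃ u v, e = s(u, v) ∧ u ∈ S ∧ v ∈ U ∧ v ∉ S}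

/-- `δ(S)`, the number of cut edges of `S` inside the subgraph induced by `U`. -/
noncomputable def deltaIn {V : Type*} (G : SimpleGraph V) (U S : Set V) : ℕ :=
  (cutEdgesIn G U S).ncard

/-- The expansion `φ(S)` of the cut `S` inside the subgraph of `G` induced by `U`. -/
noncomputable def phiIn {V : Type*} (G : SimpleGraph V) (U S : Set V) : ℝ :=
  (deltaIn G U S : ℝ) / min (S.ncard : ℝ) ((U \ S).ncard : ℝ)

/-- If `S` is a sparse cut of `H` with `|S| < |V|/4` and `S'` is a sparse cut of
the induced subgraph `H[V ∖ S]` with `|S'| < |V|/4`, then `S ∪ S'` is a sparse cut of `H`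
(all with sparseness parameter `α`). -/
theorem stmt2 {V : Type*} [Fintype V] (H : SimpleGraph V) (α : ℝ) (hα : 0 < α)
    (S S' : Set V)
    (hSne : S.Nonempty) (hSsize : (S.ncard : ℝ) < (Fintype.card V : ℝ) / 4)
    (hSphi : phiIn H Set.univ S < α)
    (hS'ne : S'.Nonempty) (hS'sub : S' ⊆ Sᶜ)
    (hS'size : (S'.ncard : ℝ) < (Fintype.card V : ℝ) / 4)
    (hS'phi : phiIn H Sᶜ S' < α) :
    phiIn H Set.univ (S ∪ S') < α := by
  classical
  have hdisj : Disjoint S S' := (Set.subset_compl_iff_disjoint_left.mp hS'sub)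
  have ha0 : 0 < S.ncard := (Set.ncard_pos (Set.toFinite _)).mpr hSne
  have hb0 : 0 < S'.ncard := (Set.ncard_pos (Set.toFinite _)).mpr hS'ne
  set n : ℝ := (Fintype.card V : ℝ) with hn
  have ha : (0:ℝ) < S.ncard := by exact_mod_cast ha0
  have hb : (0:ℝ) < S'.ncard := by exact_mod_cast hb0
  have hnpos : (0:ℝ) < n := by linarith
  -- complement cardinalities
  have hcS_nat : S.ncard + Sᶜ.ncard = Fintype.card V := by
    rw [← Nat.card_eq_fintype_card]; exact Set.ncard_add_ncard_compl S
  have hcS : ((Sᶜ).ncard : ℝ) = n - S.ncard := by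
    have := congrArg (Nat.cast : ℕ → ℝ) hcS_nat; push_cast at this; linarith
  have hble : S'.ncard ≤ Sᶜ.ncard := Set.ncard_le_ncard hS'sub (Set.toFinite _)
  have hdiff : ((Sᶜ \ S').ncard : ℝ) = n - S.ncard - S'.ncard := by
    rw [Set.ncard_diff hS'sub (Set.toFinite _), Nat.cast_sub hble, hcS]
  have hunion : ((S ∪ S').ncard : ℝ) = S.ncard + S'.ncard := by
    rw [Set.ncard_union_eq hdisj (Set.toFinite _) (Set.toFinite _)]; push_cast; ring
  have hcU_nat : (S ∪ S').ncard + (S ∪ S')ᶜ.ncard = Fintype.card V := by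
    rw [← Nat.card_eq_fintype_card]; exact Set.ncard_add_ncard_compl _
  have hcU : (((S ∪ S')ᶜ).ncard : ℝ) = n - S.ncard - S'.ncard := by
    have := congrArg (Nat.cast : ℕ → ℝ) hcU_nat; push_cast at this
    rw [hunion] at this; linarith
  -- bound delta S from hSphi
  rw [phiIn, ← Set.compl_eq_univ_diff] at hSphi
  have hd1 : (0:ℝ) < min (S.ncard : ℝ) ((Sᶜ).ncard : ℝ) := by
    rw [hcS]; exact lt_min ha (by linarith)
  have hδ1 : (deltaIn H Set.univ S : ℝ) < α * S.ncard := by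
    have := (div_lt_iff₀ hd1).mp hSphi
    calc (deltaIn H Set.univ S : ℝ) < α * min (S.ncard : ℝ) ((Sᶜ).ncard : ℝ) := by linarith
    _ ≤ α * S.ncard := by
        apply mul_le_mul_of_nonneg_left (min_le_left _ _) hα.le
  -- bound delta S' from hS'phi
  rw [phiIn] at hS'phi
  have hd2 : (0:ℝ) < min (S'.ncard : ℝ) ((Sᶜ \ S').ncard : ℝ) := by
    rw [hdiff]; exact lt_min hb (by linarith)
  have hδ2 : (deltaIn H Sᶜ S' : ℝ) < α * S'.ncard := by
    have := (div_lt_iff₀ hd2).mp hS'phi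
    calc (deltaIn H Sᶜ S' : ℝ) < α * min (S'.ncard : ℝ) ((Sᶜ \ S').ncard : ℝ) := by linarith
    _ ≤ α * S'.ncard := mul_le_mul_of_nonneg_left (min_le_left _ _) hα.le
  -- subset of cut edges
  have hsub : cutEdgesIn H Set.univ (S ∪ S') ⊆
      cutEdgesIn H Set.univ S ∪ cutEdgesIn H Sᶜ S' := by
    rintro e ⟨he, u, v, rfl, hu, -, hvn⟩
    rcases hu with hu | hu
    · exact Or.inl ⟨he, u, v, rfl, hu, trivial, fun h => hvn (Or.inl h)⟩
    · exact Or.inr ⟨he, u, v, rfl, hu, fun h => hvn (Or.inl h), fun h => hvn (Or.inr h)⟩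
  have hδle : (deltaIn H Set.univ (S ∪ S') : ℝ) ≤
      (deltaIn H Set.univ S : ℝ) + (deltaIn H Sᶜ S' : ℝ) := by
    have h1 : deltaIn H Set.univ (S ∪ S') ≤
        (cutEdgesIn H Set.univ S ∪ cutEdgesIn H Sᶜ S').ncard :=
      Set.ncard_le_ncard hsub (Set.toFinite _)
    have h2 := Set.ncard_union_le (cutEdgesIn H Set.univ S) (cutEdgesIn H Sᶜ S')
    have := le_trans h1 h2
    exact_mod_cast this
  -- final
  rw [phiIn, ← Set.compl_eq_univ_diff]
  have hmin : min (((S ∪ S').ncard : ℝ)) (((S ∪ S')ᶜ).ncard : ℝ)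
      = S.ncard + S'.ncard := by
    rw [hunion, hcU, min_eq_left (by linarith)]
  rw [hmin, div_lt_iff₀ (by linarith)]
  nlinarith
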